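/- Let h_b, h_e ∈ ℂⁿ be linearly independent vectors, γ_b, γ_e > 0, and λ > 0. The nonzero eigenvalues of the Hermitian rank-2 matrix M = γ_b h_b h_bᴴ - λ γ_e h_e h_eᴴ are the two roots ξ of ξ² - (γ_b g_b - λ γ_e g_e) ξ - λ γ_b γ_e g_b g_e (1 - ρ̄) = 0, where g_b = ‖h_b‖², g_e = ‖h_e‖², ρ = ⟨h_e, h_b⟩, and ρ̄ = |ρ|²/(g_b g_e). -/

import Mathlib

open scoped InnerProductSpace

open Matrix in
private lemma aux_mulVec {n : ℕ} (x y v : Fin n → ℂ) (a b : ℂ) :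
    (a • Matrix.vecMulVec x (star x) - b • Matrix.vecMulVec y (star y)).mulVec v
      = (a * (star x ⬝ᵥ v)) • x - (b * (star y ⬝ᵥ v)) • y := by
  funext i
  simp only [Matrix.mulVec, Matrix.vecMulVec_apply, dotProduct, Matrix.sub_apply,
    Matrix.smul_apply, Pi.sub_apply, Pi.smul_apply, smul_eq_mul, Pi.star_apply,
    Finset.mul_sum]
  rw [Finset.sum_mul, Finset.sum_mul, ← Finset.sum_sub_distrib]
  exact Finset.sum_congr rfl fun j _ => by ring

open Matrix in
private lemma aux_dot_self {n : ℕ} (x : EuclideanSpace ℂ (Fin n)) :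
    star x ⬝ᵥ (x : Fin n → ℂ) = ((‖x‖^2 : ℝ) : ℂ) := by
  rw [show ((‖x‖^2:ℝ):ℂ) = ⟪x,x⟫_ℂ by exact_mod_cast (inner_self_eq_norm_sq_to_K (𝕜 := ℂ) x).symm,
    PiLp.inner_apply]
  simp [dotProduct]
  exact Finset.sum_congr rfl fun j _ => RCLike.conj_mul _

open Matrix in
theorem stmt_5 (n : ℕ) (hn : 2 ≤ n)
    (hb he : EuclideanSpace ℂ (Fin n))
    (hli : LinearIndependent ℂ ![hb, he])
    (γb γe lam : ℝ) (hγb : 0 < γb) (hγe : 0 < γe) (hlam : 0 < lam) :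
    let gb := ‖hb‖^2
    let ge := ‖he‖^2
    let ρ : ℂ := ⟪he, hb⟫_ℂ
    let ρbar := ‖ρ‖^2 / (gb * ge)
    let M : Matrix (Fin n) (Fin n) ℂ :=
      (γb : ℂ) • Matrix.vecMulVec hb (star hb)
        - ((lam * γe : ℝ) : ℂ) • Matrix.vecMulVec he (star he)
    ∀ ξ : ℝ, ξ ≠ 0 →
      ((∃ v : Fin n → ℂ, v ≠ 0 ∧ M.mulVec v = (ξ : ℂ) • v) ↔
        ξ^2 - (γb*gb - lam*γe*ge)*ξ - lam*γb*γe*gb*ge*(1-ρbar) = 0) := by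
  intro gb ge ρ ρbar M ξ hξ
  have hpair : ∀ s t : ℂ, s • hb + t • he = 0 → s = 0 ∧ t = 0 :=
    LinearIndependent.pair_iff.mp hli
  have hhb : hb ≠ 0 := hli.ne_zero 0
  have hhe : he ≠ 0 := by
    have := hli.ne_zero 1
    simpa using this
  have hhb' : hb ≠ 0 := by simpa using hhb
  have hgb : 0 < gb := pow_pos (norm_pos_iff.mpr hhb') 2
  have hge : 0 < ge := pow_pos (norm_pos_iff.mpr hhe) 2
  -- dot product facts
  have dbb : star hb ⬝ᵥ (hb : Fin n → ℂ) = ((gb : ℝ) : ℂ) := aux_dot_self hb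
  have dee : star he ⬝ᵥ (he : Fin n → ℂ) = ((ge : ℝ) : ℂ) := aux_dot_self he
  have deb : star he ⬝ᵥ (hb : Fin n → ℂ) = ρ := by
    simp [ρ, PiLp.inner_apply, dotProduct, mul_comm]
  have dbe : star hb ⬝ᵥ (he : Fin n → ℂ) = (starRingEnd ℂ) ρ := by
    simp [ρ, PiLp.inner_apply, dotProduct, map_sum, mul_comm]
  have hconj : (starRingEnd ℂ) ρ * ρ = ((‖ρ‖^2 : ℝ) : ℂ) := by
    have := RCLike.conj_mul (K := ℂ) ρ
    push_cast
    exact this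
  -- the real determinant
  set Dr : ℝ := (γb*gb - ξ)*(lam*γe*ge + ξ) - lam*γe*γb*‖ρ‖^2 with hDr
  have hkey : gb*ge*(1-ρbar) = gb*ge - ‖ρ‖^2 := by
    simp only [ρbar]; rw [mul_sub, mul_one]; congr 1
    field_simp [hgb.ne', hge.ne']
  have hQD : ξ^2 - (γb*gb - lam*γe*ge)*ξ - lam*γb*γe*gb*ge*(1-ρbar) = -Dr := by
    rw [hDr]
    linear_combination (-(lam*γb*γe)) * hkey
  constructor
  · rintro ⟨v, hv0, hv⟩
    rw [show M = (γb : ℂ) • Matrix.vecMulVec hb (star hb)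
        - ((lam * γe : ℝ) : ℂ) • Matrix.vecMulVec he (star he) from rfl,
      aux_mulVec] at hv
    set α : ℂ := star (hb : Fin n → ℂ) ⬝ᵥ v with hα
    set β : ℂ := star (he : Fin n → ℂ) ⬝ᵥ v with hβ
    -- take dot products with hb and he
    have E1 : (γb:ℂ) * α * (gb:ℂ) - ((lam*γe:ℝ):ℂ) * β * (starRingEnd ℂ) ρ = (ξ:ℂ) * α := by
      have := congrArg (fun w => star (hb : Fin n → ℂ) ⬝ᵥ w) hv
      simpa [dotProduct_sub, dotProduct_smul, smul_eq_mul, dbb, dbe,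
        mul_assoc, ← hα] using this
    have E2 : (γb:ℂ) * α * ρ - ((lam*γe:ℝ):ℂ) * β * (ge:ℂ) = (ξ:ℂ) * β := by
      have := congrArg (fun w => star (he : Fin n → ℂ) ⬝ᵥ w) hv
      simpa [dotProduct_sub, dotProduct_smul, smul_eq_mul, deb, dee,
        mul_assoc, ← hβ] using this
    -- α, β not both zero
    have hab : α ≠ 0 ∨ β ≠ 0 := by
      by_contra h
      push_neg at h
      apply hv0
      have h1 : α = 0 := h.1
      have h2 : β = 0 := h.2
      rw [h1, h2] at hv
      simp only [mul_zero, zero_smul, sub_zero, sub_self] at hv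
      have hξc : (ξ:ℂ) ≠ 0 := by exact_mod_cast hξ
      funext i
      have := congrFun hv.symm i
      simp only [Pi.smul_apply, smul_eq_mul, Pi.zero_apply] at this ⊢
      exact (mul_eq_zero.mp this).resolve_left hξc
    set Dc : ℂ := ((γb:ℂ)*(gb:ℂ) - (ξ:ℂ))*(((lam*γe:ℝ):ℂ)*(ge:ℂ) + (ξ:ℂ))
        - ((lam*γe:ℝ):ℂ)*(γb:ℂ)*((starRingEnd ℂ) ρ * ρ) with hDc
    have hDcα : Dc * α = 0 := by
      rw [hDc]; linear_combination (((lam*γe:ℝ):ℂ)*(ge:ℂ) + (ξ:ℂ)) * E1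
        - ((lam*γe:ℝ):ℂ)*((starRingEnd ℂ) ρ)*E2
    have hDcβ : Dc * β = 0 := by
      rw [hDc]; linear_combination (γb:ℂ)*ρ*E1 - ((γb:ℂ)*(gb:ℂ) - (ξ:ℂ))*E2
    have hDc0 : Dc = 0 := by
      rcases hab with h | h
      · exact (mul_eq_zero.mp hDcα).resolve_right h
      · exact (mul_eq_zero.mp hDcβ).resolve_right h
    have hDr0 : Dr = 0 := by
      have : ((Dr : ℝ) : ℂ) = 0 := by
        rw [hDc, hconj] at hDc0
        rw [hDr]
        push_cast
        push_cast at hDc0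
        linear_combination hDc0
      exact_mod_cast this
    rw [hQD, hDr0, neg_zero]
  · intro hQ
    have hDr0 : Dr = 0 := by
      rw [hQD] at hQ
      linarith
    have hDc0 : ((γb:ℂ)*(gb:ℂ) - (ξ:ℂ))*(((lam*γe:ℝ):ℂ)*(ge:ℂ) + (ξ:ℂ))
        - ((lam*γe:ℝ):ℂ)*(γb:ℂ)*((starRingEnd ℂ) ρ * ρ) = 0 := by
      rw [hconj]
      have : ((Dr : ℝ) : ℂ) = 0 := by exact_mod_cast hDr0
      rw [hDr] at this
      push_cast at this ⊢
      linear_combination this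
    -- choose the candidate coefficients
    obtain ⟨a, b, hab, S1, S2⟩ :
        ∃ a b : ℂ, (a ≠ 0 ∨ b ≠ 0) ∧
          (γb:ℂ) * (a * (gb:ℂ) + b * (starRingEnd ℂ) ρ) = (ξ:ℂ) * a ∧
          -(((lam*γe:ℝ):ℂ) * (a * ρ + b * (ge:ℂ))) = (ξ:ℂ) * b := by
      by_cases hcase : ξ = γb*gb
      · refine ⟨((lam*γe:ℝ):ℂ)*(ge:ℂ) + (ξ:ℂ), -(((lam*γe:ℝ):ℂ))*ρ, ?_, ?_, ?_⟩
        · left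
          have hpos : (0:ℝ) < lam*γe*ge + ξ := by
            have : (0:ℝ) < ξ := hcase ▸ mul_pos hγb hgb
            have : (0:ℝ) < lam*γe*ge := by positivity
            linarith
          intro h
          have h2 : ((lam*γe*ge + ξ : ℝ):ℂ) = 0 := by push_cast; push_cast at h; linear_combination h
          rw [Complex.ofReal_eq_zero] at h2
          linarith
        · linear_combination hDc0
        · ring
      · refine ⟨(γb:ℂ)*((starRingEnd ℂ) ρ), (ξ:ℂ) - (γb:ℂ)*(gb:ℂ), ?_, ?_, ?_⟩
        · right
          intro h
          apply hcase
          have h2 : ((ξ - γb*gb : ℝ):ℂ) = 0 := by push_cast; push_cast at h; linear_combination h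
          rw [Complex.ofReal_eq_zero] at h2
          linarith
        · ring
        · linear_combination hDc0
    set v : Fin n → ℂ := fun i => a * hb i + b * he i with hvdef
    have hveq : (a • hb + b • he : EuclideanSpace ℂ (Fin n)) = v := rfl
    have dv1 : star (hb : Fin n → ℂ) ⬝ᵥ v = a * (gb:ℂ) + b * (starRingEnd ℂ) ρ := by
      have h : star (hb : Fin n → ℂ) ⬝ᵥ v
          = a * (star hb ⬝ᵥ (hb : Fin n → ℂ)) + b * (star hb ⬝ᵥ (he : Fin n → ℂ)) := by
        simp only [dotProduct, hvdef, Finset.mul_sum]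
        rw [← Finset.sum_add_distrib]
        exact Finset.sum_congr rfl fun j _ => by first | (simp; ring) | simp | ring
      rw [h, dbb, dbe]
    have dv2 : star (he : Fin n → ℂ) ⬝ᵥ v = a * ρ + b * (ge:ℂ) := by
      have h : star (he : Fin n → ℂ) ⬝ᵥ v
          = a * (star he ⬝ᵥ (hb : Fin n → ℂ)) + b * (star he ⬝ᵥ (he : Fin n → ℂ)) := by
        simp only [dotProduct, hvdef, Finset.mul_sum]
        rw [← Finset.sum_add_distrib]
        exact Finset.sum_congr rfl fun j _ => by first | (simp; ring) | simp | ring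
      rw [h, deb, dee]
    refine ⟨v, ?_, ?_⟩
    · intro h
      rcases hpair a b (by ext i; have := congrFun (hveq.trans h) i; simpa using this) with ⟨ha, hb0⟩
      rcases hab with h' | h' <;> [exact h' ha; exact h' hb0]
    · rw [show M = (γb : ℂ) • Matrix.vecMulVec hb (star hb)
          - ((lam * γe : ℝ) : ℂ) • Matrix.vecMulVec he (star he) from rfl,
        aux_mulVec, dv1, dv2]
      funext i
      simp only [Pi.sub_apply, Pi.smul_apply, smul_eq_mul, hvdef]
      have s1 := congrArg (· * (hb : Fin n → ℂ) i) S1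
      have s2 := congrArg (· * (he : Fin n → ℂ) i) S2
      simp only at s1 s2
      linear_combination s1 + s2
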